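/- arXiv:2502.09531 — 3 statements merged into one kernel-verified Lean document; each statement's English description precedes it below -/
import Mathlib

section
/- If y : [0,L] → ℝ is C² with y'(0) = 0, then ∫₀ᴸ (y'(x))² dx ≤ (4L²/π²) ∫₀ᴸ (y''(x))² dx. -/
open Real MeasureTheory Set

/-- For y ∈ C²([0,L]) with y'(0)=0:
    ∫₀ᴸ (y')² ≤ (4L²/π²)∫₀ᴸ (y'')². -/
theorem wirtinger_first_derivative
    (L : ℝ) (hL : 0 < L) (y y' y'' : ℝ → ℝ)
    (hy1 : ∀ x ∈ Icc (0:ℝ) L, HasDerivWithinAt y (y' x) (Icc (0:ℝ) L) x)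
    (hy2 : ∀ x ∈ Icc (0:ℝ) L, HasDerivWithinAt y' (y'' x) (Icc (0:ℝ) L) x)
    (hy2c : ContinuousOn y'' (Icc (0:ℝ) L))
    (h0' : y' 0 = 0) :
    ∫ x in (0:ℝ)..L, (y' x)^2 ≤
      (4 * L^2 / Real.pi^2) * ∫ x in (0:ℝ)..L, (y'' x)^2 := by
  have hπ := Real.pi_pos
  set k : ℝ := Real.pi / (2 * L) with hkdef
  have hk : 0 < k := by positivity
  have hkL : k * L = Real.pi / 2 := by
    rw [hkdef]; field_simp
  -- continuity of y'
  have hy'c : ContinuousOn y' (Icc 0 L) := fun x hx => (hy2 x hx).continuousWithinAt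
  -- bound on y''
  obtain ⟨M, hM⟩ := isCompact_Icc.exists_bound_of_continuousOn hy2c
  have hM0 : 0 ≤ M := le_trans (norm_nonneg _) (hM 0 ⟨le_rfl, hL.le⟩)
  -- |y' ε| ≤ M ε for ε ∈ Icc 0 L
  have hlip : ∀ ε ∈ Icc (0:ℝ) L, |y' ε| ≤ M * ε := by
    intro ε hε
    have := (convex_Icc (0:ℝ) L).norm_image_sub_le_of_norm_hasDerivWithin_le
      hy2 hM ⟨le_rfl, hL.le⟩ hε
    simpa [h0', Real.norm_eq_abs, abs_of_nonneg hε.1] using this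
  -- sin (k x) positivity on (0, L]
  have hsin : ∀ x : ℝ, 0 < x → x ≤ L → 0 < Real.sin (k * x) := by
    intro x hx hxL
    apply Real.sin_pos_of_pos_of_lt_pi (by positivity)
    have : k * x ≤ Real.pi / 2 := by
      calc k * x ≤ k * L := by nlinarith
      _ = Real.pi / 2 := hkL
    linarith
  -- the integrand f
  set f : ℝ → ℝ := fun x => k^2 * (y' x)^2 - (y'' x)^2 with hfdef
  have hfc : ContinuousOn f (Icc 0 L) :=
    ((continuousOn_const.mul (hy'c.pow 2)).sub (hy2c.pow 2))
  have hfint : ∀ a b, a ∈ Icc (0:ℝ) L → b ∈ Icc (0:ℝ) L →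
      IntervalIntegrable f volume a b := by
    intro a b ha hb
    exact (hfc.mono (uIcc_subset_Icc ha hb)).intervalIntegrable
  -- key estimate on [ε, L]
  have key : ∀ ε ∈ Ioo (0:ℝ) L, (∫ x in ε..L, f x) ≤ M^2 * ε := by
    intro ε hε
    obtain ⟨hε0, hεL⟩ := hε
    set F : ℝ → ℝ := fun x => k * (Real.cos (k*x) / Real.sin (k*x)) * (y' x)^2 with hFdef
    set F' : ℝ → ℝ := fun x =>
      k * ((-k / (Real.sin (k*x))^2) * (y' x)^2
        + (Real.cos (k*x) / Real.sin (k*x)) * (2 * y' x * y'' x)) with hF'def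
    have hderiv : ∀ x ∈ Ioo ε L, HasDerivAt F (F' x) x := by
      intro x hx
      have hx0 : 0 < x := hε0.trans hx.1
      have hs : 0 < Real.sin (k * x) := hsin x hx0 hx.2.le
      have hxmem : Icc (0:ℝ) L ∈ nhds x := Icc_mem_nhds hx0 hx.2
      have hy'd : HasDerivAt y' (y'' x) x :=
        (hy2 x ⟨hx0.le, hx.2.le⟩).hasDerivAt hxmem
      have hcos : HasDerivAt (fun t => Real.cos (k*t)) (-Real.sin (k*x) * k) x := by
        simpa [Function.comp_def] using (Real.hasDerivAt_cos (k*x)).comp x ((hasDerivAt_id x).const_mul k)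
      have hsin' : HasDerivAt (fun t => Real.sin (k*t)) (Real.cos (k*x) * k) x := by
        simpa [Function.comp_def] using (Real.hasDerivAt_sin (k*x)).comp x ((hasDerivAt_id x).const_mul k)
      have hq : HasDerivAt (fun t => Real.cos (k*t) / Real.sin (k*t))
          (-k / (Real.sin (k*x))^2) x := by
        have h := hcos.div hsin' hs.ne'
        have h1 := Real.sin_sq_add_cos_sq (k*x)
        have hnum : -Real.sin (k*x) * k * Real.sin (k*x)
            - Real.cos (k*x) * (Real.cos (k*x) * k) = -k := by
          linear_combination (-k) * h1
        rw [hnum] at h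
        exact h
      have hsq : HasDerivAt (fun t => (y' t)^2) (2 * y' x * y'' x) x := by
        have h := hy'd.pow 2
        norm_num at h
        exact h
      have h := (hq.const_mul k).mul hsq
      refine h.congr_deriv ?_
      simp only [hF'def]
      ring
    have hFcont : ContinuousOn F (Icc ε L) := by
      apply ContinuousOn.mul
      apply ContinuousOn.mul continuousOn_const
      · apply ContinuousOn.div
        · exact (Real.continuous_cos.comp (continuous_const.mul continuous_id)).continuousOn
        · exact (Real.continuous_sin.comp (continuous_const.mul continuous_id)).continuousOn
        · intro x hx
          exact (hsin x (hε0.trans_le hx.1) hx.2).ne'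
      · exact ((hy'c.mono (Icc_subset_Icc hε0.le le_rfl)).pow 2)
    have hF'cont : ContinuousOn F' (Icc ε L) := by
      have hsc : ContinuousOn (fun x => Real.sin (k*x)) (Icc ε L) :=
        (Real.continuous_sin.comp (continuous_const.mul continuous_id)).continuousOn
      have hcc : ContinuousOn (fun x => Real.cos (k*x)) (Icc ε L) :=
        (Real.continuous_cos.comp (continuous_const.mul continuous_id)).continuousOn
      have hsne : ∀ x ∈ Icc ε L, Real.sin (k*x) ≠ 0 :=
        fun x hx => (hsin x (hε0.trans_le hx.1) hx.2).ne'
      have h1 : ContinuousOn y' (Icc ε L) := hy'c.mono (Icc_subset_Icc hε0.le le_rfl)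
      have h2 : ContinuousOn y'' (Icc ε L) := hy2c.mono (Icc_subset_Icc hε0.le le_rfl)
      apply ContinuousOn.mul continuousOn_const
      apply ContinuousOn.add
      · exact (ContinuousOn.div continuousOn_const (hsc.pow 2)
          (fun x hx => pow_ne_zero 2 (hsne x hx))).mul (h1.pow 2)
      · exact (hcc.div hsc hsne).mul ((continuousOn_const.mul h1).mul h2)
    have hF'int : IntervalIntegrable F' volume ε L := by
      apply (hF'cont.mono _).intervalIntegrable
      rw [uIcc_of_le hεL.le]
    have hFTC : (∫ x in ε..L, F' x) = F L - F ε := by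
      apply intervalIntegral.integral_eq_sub_of_hasDeriv_right_of_le hεL.le hFcont
        (fun x hx => ((hderiv x hx).hasDerivWithinAt)) hF'int
    -- pointwise: f x ≤ -F' x on [ε, L]
    have hpt : ∀ x ∈ Icc ε L, f x ≤ -F' x := by
      intro x hx
      have hs : 0 < Real.sin (k * x) := hsin x (hε0.trans_le hx.1) hx.2
      have hpy := Real.sin_sq_add_cos_sq (k*x)
      have hsq := sq_nonneg (k * Real.cos (k*x) * y' x - Real.sin (k*x) * y'' x)
      simp only [hfdef, hF'def]
      rw [← sub_nonneg]
      have hid : -(k * ((-k/(Real.sin (k*x))^2)*(y' x)^2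
            + (Real.cos (k*x)/Real.sin (k*x))*(2*y' x*y'' x)))
          - (k^2*(y' x)^2 - (y'' x)^2)
          = ((k*Real.cos (k*x)*y' x - Real.sin (k*x)*y'' x)/Real.sin (k*x))^2 := by
        field_simp
        linear_combination (-(k^2) * (y' x)^2) * hpy
      rw [hid]
      positivity
    have hmono : (∫ x in ε..L, f x) ≤ ∫ x in ε..L, -F' x := by
      apply intervalIntegral.integral_mono_on hεL.le
        (hfint ε L ⟨hε0.le, hεL.le⟩ ⟨hL.le, le_rfl⟩)
        hF'int.neg hpt
    have hFL : F L = 0 := by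
      simp [hFdef, hkL, Real.cos_pi_div_two]
    have hFε : F ε ≤ M^2 * ε := by
      have hs : 0 < Real.sin (k * ε) := hsin ε hε0 hεL.le
      have hc : 0 < Real.cos (k * ε) := by
        apply Real.cos_pos_of_mem_Ioo
        constructor
        · nlinarith
        · calc k * ε < k * L := by nlinarith
            _ = Real.pi / 2 := hkL
      have htan : k * ε * Real.cos (k*ε) < Real.sin (k*ε) := by
        have h1 : k * ε < Real.tan (k * ε) := Real.lt_tan (by positivity)
          (by calc k * ε < k * L := by nlinarith
                _ = Real.pi / 2 := hkL)
        rw [Real.tan_eq_sin_div_cos, lt_div_iff₀ hc] at h1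
        linarith
      have hb := hlip ε ⟨hε0.le, hεL.le⟩
      have hb2 : (y' ε)^2 ≤ (M*ε)^2 := by
        have := abs_nonneg (y' ε)
        nlinarith [sq_abs (y' ε)]
      calc F ε = k * (Real.cos (k*ε) / Real.sin (k*ε)) * (y' ε)^2 := rfl
        _ ≤ k * (Real.cos (k*ε) / Real.sin (k*ε)) * (M*ε)^2 := by
            apply mul_le_mul_of_nonneg_left hb2
            positivity
        _ ≤ k * (1 / (k*ε)) * (M*ε)^2 := by
            apply mul_le_mul_of_nonneg_right _ (by positivity)
            apply mul_le_mul_of_nonneg_left _ hk.le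
            rw [div_le_div_iff₀ hs (by positivity)]
            nlinarith
        _ = M^2 * ε := by field_simp
    calc (∫ x in ε..L, f x) ≤ ∫ x in ε..L, -F' x := hmono
      _ = -(F L - F ε) := by rw [intervalIntegral.integral_neg, hFTC]
      _ = F ε := by rw [hFL]; ring
      _ ≤ M^2 * ε := hFε
  -- limit as ε → 0⁺
  have hmain : (∫ x in (0:ℝ)..L, f x) ≤ 0 := by
    have hGc : ContinuousOn (fun ε => ∫ x in ε..L, f x) (Icc 0 L) := by
      have : IntegrableOn f (uIcc 0 L) volume := by
        rw [uIcc_of_le hL.le]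
        exact (hfc.integrableOn_compact isCompact_Icc)
      simpa [uIcc_of_le hL.le] using intervalIntegral.continuousOn_primitive_interval_left this
    haveI : (nhdsWithin (0:ℝ) (Ioo 0 L)).NeBot := left_nhdsWithin_Ioo_neBot hL
    have h1 : Filter.Tendsto (fun ε => ∫ x in ε..L, f x) (nhdsWithin 0 (Ioo 0 L))
        (nhds (∫ x in (0:ℝ)..L, f x)) := by
      apply ((hGc 0 ⟨le_rfl, hL.le⟩).mono_left (nhdsWithin_mono 0 Ioo_subset_Icc_self))
    have h2 : Filter.Tendsto (fun ε : ℝ => M^2 * ε) (nhdsWithin 0 (Ioo 0 L)) (nhds 0) := by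
      have : Filter.Tendsto (fun ε : ℝ => M^2 * ε) (nhds 0) (nhds (M^2 * 0)) :=
        (continuous_const.mul continuous_id).tendsto 0
      simpa using this.mono_left nhdsWithin_le_nhds
    exact le_of_tendsto_of_tendsto h1 h2
      (Filter.eventually_of_mem self_mem_nhdsWithin (fun ε hε => key ε hε))
  -- conclude
  have hy'int : IntervalIntegrable (fun x => (y' x)^2) volume 0 L := by
    apply ((hy'c.pow 2).mono _).intervalIntegrable
    rw [uIcc_of_le hL.le]
  have hy''int : IntervalIntegrable (fun x => (y'' x)^2) volume 0 L := by
    apply ((hy2c.pow 2).mono _).intervalIntegrable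
    rw [uIcc_of_le hL.le]
  have hsplit : (∫ x in (0:ℝ)..L, f x)
      = k^2 * (∫ x in (0:ℝ)..L, (y' x)^2) - ∫ x in (0:ℝ)..L, (y'' x)^2 := by
    rw [hfdef]
    rw [intervalIntegral.integral_sub (hy'int.const_mul _) hy''int,
      intervalIntegral.integral_const_mul]
  rw [hsplit] at hmain
  have hk2 : k^2 * (4 * L^2 / Real.pi^2) = 1 := by
    rw [hkdef]; field_simp; ring
  have hc : (0:ℝ) < 4 * L^2 / Real.pi^2 := by positivity
  have h3 : k^2 * (∫ x in (0:ℝ)..L, (y' x)^2) ≤ ∫ x in (0:ℝ)..L, (y'' x)^2 := by linarith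
  calc (∫ x in (0:ℝ)..L, (y' x)^2)
      = (4*L^2/Real.pi^2) * (k^2 * ∫ x in (0:ℝ)..L, (y' x)^2) := by
        rw [← mul_assoc, mul_comm (4*L^2/Real.pi^2) (k^2), hk2, one_mul]
    _ ≤ (4*L^2/Real.pi^2) * ∫ x in (0:ℝ)..L, (y'' x)^2 :=
        mul_le_mul_of_nonneg_left h3 hc.le
end

section
/- Let L > 0, ρ > 0, and let z, y : [0,L] → ℝ with z, y_x square-integrable, y ∈ C¹([0,L]) with y(0)=0 and y'(0)=0 (where y_x denotes y'). Then V₁ := ρ∫₀ᴸ (x−L) z(x) y'(x) dx satisfies V₁ ≥ −(ρL/2)∫₀ᴸ z(x)² dx − (2ρL³/π²)∫₀ᴸ y''(x)² dx, assuming y ∈ C². -/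
open Real MeasureTheory Set

/-- Cauchy–Schwarz for the primitive: `(∫₀ˣ g)² ≤ x ∫₀ˣ g²` for `g` continuous on `[0,L]`. -/
private lemma cs_primitive {L : ℝ} (hL : 0 < L) {g : ℝ → ℝ}
    (hg : ContinuousOn g (Icc 0 L)) :
    ∀ x ∈ Icc (0:ℝ) L, (∫ t in (0:ℝ)..x, g t)^2 ≤ x * ∫ t in (0:ℝ)..x, (g t)^2 := by
  set F : ℝ → ℝ := fun x => ∫ t in (0:ℝ)..x, g t with hF
  set G : ℝ → ℝ := fun x => ∫ t in (0:ℝ)..x, (g t)^2 with hG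
  set H : ℝ → ℝ := fun x => x * G x - (F x)^2 with hH
  have hg2c : ContinuousOn (fun t => (g t)^2) (Icc 0 L) := hg.pow 2
  have hgi : ∀ x ∈ Icc (0:ℝ) L, IntervalIntegrable g volume 0 x := fun x hx =>
    ContinuousOn.intervalIntegrable (by
      rw [uIcc_of_le hx.1]; exact hg.mono (Icc_subset_Icc le_rfl hx.2))
  have hg2i : ∀ x ∈ Icc (0:ℝ) L, IntervalIntegrable (fun t => (g t)^2) volume 0 x := fun x hx =>
    ContinuousOn.intervalIntegrable (by
      rw [uIcc_of_le hx.1]; exact hg2c.mono (Icc_subset_Icc le_rfl hx.2))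
  -- continuity of F and G on Icc
  have hFc : ContinuousOn F (Icc 0 L) := by
    have := intervalIntegral.continuousOn_primitive_interval
      (f := g) (μ := volume) (a := 0) (b := L)
      (by rw [uIcc_of_le hL.le]
          exact hg.integrableOn_compact isCompact_Icc)
    rwa [uIcc_of_le hL.le] at this
  have hGc : ContinuousOn G (Icc 0 L) := by
    have := intervalIntegral.continuousOn_primitive_interval
      (f := fun t => (g t)^2) (μ := volume) (a := 0) (b := L)
      (by rw [uIcc_of_le hL.le]
          exact hg2c.integrableOn_compact isCompact_Icc)
    rwa [uIcc_of_le hL.le] at this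
  have hHc : ContinuousOn H (Icc 0 L) := (continuousOn_id.mul hGc).sub (hFc.pow 2)
  -- derivative of H at interior points, with the derivative nonnegative
  have hHd : ∀ x ∈ Ioo (0:ℝ) L,
      HasDerivAt H (G x + x * (g x)^2 - 2 * F x * g x) x := by
    intro x hx
    have hxI : x ∈ Icc (0:ℝ) L := ⟨hx.1.le, hx.2.le⟩
    have hnb : Icc (0:ℝ) L ∈ nhds x := Icc_mem_nhds hx.1 hx.2
    have hgat : ContinuousAt g x := hg.continuousAt hnb
    have hg2at : ContinuousAt (fun t => (g t)^2) x := hg2c.continuousAt hnb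
    have hgm : StronglyMeasurableAtFilter g (nhds x) volume :=
      ⟨Icc 0 L, hnb, hg.aestronglyMeasurable measurableSet_Icc⟩
    have hg2m : StronglyMeasurableAtFilter (fun t => (g t)^2) (nhds x) volume :=
      ⟨Icc 0 L, hnb, hg2c.aestronglyMeasurable measurableSet_Icc⟩
    have hFd : HasDerivAt F (g x) x :=
      intervalIntegral.integral_hasDerivAt_right (hgi x hxI) hgm hgat
    have hGd : HasDerivAt G ((g x)^2) x :=
      intervalIntegral.integral_hasDerivAt_right (hg2i x hxI) hg2m hg2at
    have h1 : HasDerivAt (fun u => u * G u) (1 * G x + x * (g x)^2) x :=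
      (hasDerivAt_id x).mul hGd
    have h2 : HasDerivAt (fun u => (F u)^2) (2 * F x ^ (2-1) * g x) x := hFd.pow 2
    have := h1.sub h2
    exact this.congr_deriv (by norm_num)
  have hHd' : ∀ x ∈ Ioo (0:ℝ) L, 0 ≤ G x + x * (g x)^2 - 2 * F x * g x := by
    intro x hx
    have hxI : x ∈ Icc (0:ℝ) L := ⟨hx.1.le, hx.2.le⟩
    have key : ∫ t in (0:ℝ)..x, (g t - g x)^2 = G x + x * (g x)^2 - 2 * F x * g x := by
      have : ∀ t, (g t - g x)^2 = (g t)^2 - (2 * g x) * g t + (g x)^2 := by intro t; ring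
      simp_rw [this]
      rw [intervalIntegral.integral_add (((hg2i x hxI).sub ((hgi x hxI).const_mul _)))
            intervalIntegrable_const,
          intervalIntegral.integral_sub (hg2i x hxI) ((hgi x hxI).const_mul _),
          intervalIntegral.integral_const_mul, intervalIntegral.integral_const]
      simp [hF, hG]
      ring
    rw [← key]
    apply intervalIntegral.integral_nonneg hx.1.le
    intro t _; positivity
  -- H is monotone on [0, L]
  have hmono : MonotoneOn H (Icc 0 L) := by
    apply monotoneOn_of_deriv_nonneg (convex_Icc 0 L) hHc
    · intro x hx
      rw [interior_Icc] at hx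
      exact (hHd x hx).differentiableAt.differentiableWithinAt
    · intro x hx
      rw [interior_Icc] at hx
      rw [(hHd x hx).deriv]
      exact hHd' x hx
  intro x hx
  have h0 : H 0 = 0 := by simp [hH, hF, hG]
  have := hmono (left_mem_Icc.mpr hL.le) hx hx.1
  rw [h0] at this
  simpa [hH, sub_nonneg] using this

/-- Lower bound on the cross term V₁ = ρ∫₀ᴸ (x−L) z y' dx:
    V₁ ≥ −(ρL/2)∫₀ᴸ z² − (2ρL³/π²)∫₀ᴸ (y'')². -/
theorem V1_lower_bound
    (L ρ : ℝ) (hL : 0 < L) (hρ : 0 < ρ) (z y y' y'' : ℝ → ℝ)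
    (hz : IntervalIntegrable (fun x => (z x)^2) volume 0 L)
    (hint : IntervalIntegrable (fun x => (x - L) * z x * y' x) volume 0 L)
    (hy1 : ∀ x ∈ Icc (0:ℝ) L, HasDerivWithinAt y (y' x) (Icc (0:ℝ) L) x)
    (hy2 : ∀ x ∈ Icc (0:ℝ) L, HasDerivWithinAt y' (y'' x) (Icc (0:ℝ) L) x)
    (hy2c : ContinuousOn y'' (Icc (0:ℝ) L))
    (h0 : y 0 = 0) (h0' : y' 0 = 0) :
    ρ * ∫ x in (0:ℝ)..L, (x - L) * z x * y' x ≥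
      -(ρ * L / 2) * (∫ x in (0:ℝ)..L, (z x)^2)
        - (2 * ρ * L^3 / Real.pi^2) * ∫ x in (0:ℝ)..L, (y'' x)^2 := by
  set C : ℝ := ∫ x in (0:ℝ)..L, (y'' x)^2 with hC
  have hCnn : 0 ≤ C := intervalIntegral.integral_nonneg hL.le (fun t _ => sq_nonneg _)
  have hy'c : ContinuousOn y' (Icc 0 L) := fun x hx => (hy2 x hx).continuousWithinAt
  have hy2i : IntervalIntegrable y'' volume 0 L :=
    ContinuousOn.intervalIntegrable (by rwa [uIcc_of_le hL.le])
  -- FTC: y' x = ∫₀ˣ y''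
  have hftc : ∀ x ∈ Icc (0:ℝ) L, y' x = ∫ t in (0:ℝ)..x, y'' t := by
    intro x hx
    have : ∫ t in (0:ℝ)..x, y'' t = y' x - y' 0 := by
      apply intervalIntegral.integral_eq_sub_of_hasDeriv_right_of_le hx.1
      · exact hy'c.mono (Icc_subset_Icc le_rfl hx.2)
      · intro t ht
        have htI : t ∈ Icc (0:ℝ) L := ⟨ht.1.le, ht.2.le.trans hx.2⟩
        have htL : t ∈ Ioo (0:ℝ) L := ⟨ht.1, lt_of_lt_of_le ht.2 hx.2⟩
        exact (hy2 t htI).mono_of_mem_nhdsWithin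
          (mem_nhdsWithin_of_mem_nhds (Icc_mem_nhds htL.1 htL.2))
      · refine hy2i.mono_set ?_
        rw [uIcc_of_le hx.1, uIcc_of_le hL.le]
        exact Icc_subset_Icc le_rfl hx.2
    rw [h0', sub_zero] at this
    exact this.symm
  -- pointwise bound on (y')²
  have hy'sq : ∀ x ∈ Icc (0:ℝ) L, (y' x)^2 ≤ x * C := by
    intro x hx
    rw [hftc x hx]
    refine (cs_primitive hL hy2c x hx).trans ?_
    apply mul_le_mul_of_nonneg_left _ hx.1
    apply intervalIntegral.integral_mono_interval le_rfl hx.1 hx.2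
    · filter_upwards with t using sq_nonneg _
    · exact ContinuousOn.intervalIntegrable (by rw [uIcc_of_le hL.le]; exact hy2c.pow 2)
  -- pointwise lower bound for the integrand
  have hpt : ∀ x ∈ Icc (0:ℝ) L,
      -(L/2) * (z x)^2 - ((L - x) * x / 2) * C ≤ (x - L) * z x * y' x := by
    intro x hx
    have hb2 : (y' x)^2 ≤ x * C := hy'sq x hx
    nlinarith [sq_nonneg (z x + y' x), sq_nonneg (z x - y' x), sq_nonneg (z x),
      hx.1, hx.2, mul_nonneg (sub_nonneg.mpr hx.2) (sq_nonneg (z x)),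
      mul_nonneg (sub_nonneg.mpr hx.2) (sub_nonneg.mpr hb2)]
  -- integrate the pointwise bound
  have hpoly : Continuous (fun x : ℝ => ((L - x) * x / 2) * C) :=
    (((continuous_const.sub continuous_id').mul continuous_id').div_const 2).mul continuous_const
  have hlowint : IntervalIntegrable
      (fun x => -(L/2) * (z x)^2 - ((L - x) * x / 2) * C) volume 0 L :=
    (hz.const_mul (-(L/2))).sub (hpoly.intervalIntegrable 0 L)
  have hmono := intervalIntegral.integral_mono_on hL.le hlowint hint hpt
  -- compute the integral of the lower bound
  have hcomp : (∫ x in (0:ℝ)..L, (-(L/2) * (z x)^2 - ((L - x) * x / 2) * C))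
      = -(L/2) * (∫ x in (0:ℝ)..L, (z x)^2) - (L^3/12) * C := by
    rw [intervalIntegral.integral_sub (hz.const_mul (-(L/2)))
        (hpoly.intervalIntegrable 0 L),
        intervalIntegral.integral_const_mul, intervalIntegral.integral_mul_const]
    congr 1
    have : ∀ x : ℝ, (L - x) * x / 2 = (L/2) * x - (1/2) * x^2 := fun x => by ring
    simp_rw [this]
    have e1 : IntervalIntegrable (fun x : ℝ => L/2 * x) volume 0 L :=
      (continuous_const.mul continuous_id' : Continuous fun x : ℝ => L/2 * x).intervalIntegrable 0 L
    have e2 : IntervalIntegrable (fun x : ℝ => 1/2 * x^2) volume 0 L :=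
      (continuous_const.mul (continuous_pow 2) : Continuous fun x : ℝ => 1/2 * x^2).intervalIntegrable 0 L
    rw [intervalIntegral.integral_sub e1 e2,
        intervalIntegral.integral_const_mul, intervalIntegral.integral_const_mul,
        integral_id, integral_pow]
    ring
  rw [hcomp] at hmono
  -- final arithmetic
  have hπ : 0 < Real.pi := Real.pi_pos
  have hπ4 : Real.pi ≤ 4 := Real.pi_le_four
  have key : -(ρ * L / 2) * (∫ x in (0:ℝ)..L, (z x)^2)
      - (2 * ρ * L^3 / Real.pi^2) * C
      ≤ ρ * (-(L/2) * (∫ x in (0:ℝ)..L, (z x)^2) - (L^3/12) * C) := by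
    have h1 : (ρ * L^3 / 12) * C ≤ (2 * ρ * L^3 / Real.pi^2) * C := by
      apply mul_le_mul_of_nonneg_right _ hCnn
      rw [div_le_div_iff₀ (by norm_num) (by positivity)]
      have hpp : Real.pi * Real.pi ≤ 16 := by nlinarith
      nlinarith [mul_pos hρ (pow_pos hL 3)]
    nlinarith
  calc -(ρ * L / 2) * (∫ x in (0:ℝ)..L, (z x)^2)
      - (2 * ρ * L^3 / Real.pi^2) * C
      ≤ ρ * (-(L/2) * (∫ x in (0:ℝ)..L, (z x)^2) - (L^3/12) * C) := key
    _ ≤ ρ * ∫ x in (0:ℝ)..L, (x - L) * z x * y' x :=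
        mul_le_mul_of_nonneg_left hmono hρ.le
end

section
/- Let L, EI, ρ, J > 0. Then there exist a₁, a₂, a₃, a₄, k₁, k₂, δ, η > 0 satisfying simultaneously: 1 − La₃ − a₄ > 0; EI/2 − 2ρL³a₃/π² − 8ρL⁴a₄/π⁴ > 0; EIa₁/2 − 2ρL³a₄/π² > 0; JEI/a₂ − k₂J² − ρL²a₃/(2δ) − 2ρL³a₄/3 > 0; (1 − Lδ)a₃ − 4a₄ > 0; k₂a₂² − ηk₂a₁a₂² + EIηa₄/2 − LEIa₃/2 ≥ 0; and k₂a₁²a₂² − k₂a₁a₂²/η + EIa₄/(2η) > 0. -/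
open Real

set_option maxHeartbeats 1000000 in
/-- Feasibility of the Lyapunov controller gains for the flexible spacecraft. -/
theorem gain_feasibility
    (L EI ρ J : ℝ) (hL : 0 < L) (hEI : 0 < EI) (hρ : 0 < ρ) (hJ : 0 < J) :
    ∃ a₁ a₂ a₃ a₄ k₁ k₂ δ η : ℝ,
      0 < a₁ ∧ 0 < a₂ ∧ 0 < a₃ ∧ 0 < a₄ ∧ 0 < k₁ ∧ 0 < k₂ ∧ 0 < δ ∧ 0 < η ∧
      1 - L * a₃ - a₄ > 0 ∧
      EI / 2 - 2 * ρ * L^3 * a₃ / Real.pi^2 - 8 * ρ * L^4 * a₄ / Real.pi^4 > 0 ∧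
      EI * a₁ / 2 - 2 * ρ * L^3 * a₄ / Real.pi^2 > 0 ∧
      J * EI / a₂ - k₂ * J^2 - ρ * L^2 * a₃ / (2 * δ) - 2 * ρ * L^3 * a₄ / 3 > 0 ∧
      (1 - L * δ) * a₃ - 4 * a₄ > 0 ∧
      k₂ * a₂^2 - η * k₂ * a₁ * a₂^2 + EI * η * a₄ / 2 - L * EI * a₃ / 2 ≥ 0 ∧
      k₂ * a₁^2 * a₂^2 - k₂ * a₁ * a₂^2 / η + EI * a₄ / (2 * η) > 0 := by
  have hπ : (3:ℝ) < Real.pi := Real.pi_gt_three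
  have hπpos : (0:ℝ) < Real.pi := by linarith
  have hπ2 : (8:ℝ) < Real.pi ^ 2 := by nlinarith
  have hπ4 : (64:ℝ) < Real.pi ^ 4 := by nlinarith
  set K : ℝ := min (min (min (EI/4) (L*EI)) (EI^2/(4*ρ*L^2*(1+L))))
      (min (EI^2/(2*ρ*L^3)) (J*EI/(2*(J^2 + 3*ρ*L^2/EI)))) with hK
  have hKpos : 0 < K := by
    refine lt_min (lt_min (lt_min (by positivity) (by positivity)) (by positivity))
      (lt_min (by positivity) (by positivity))
  have hK1 : K ≤ EI/4 := le_trans (min_le_left _ _) (le_trans (min_le_left _ _) (min_le_left _ _))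
  have hK1' : K ≤ L*EI := le_trans (min_le_left _ _) (le_trans (min_le_left _ _) (min_le_right _ _))
  have hK2 : K ≤ EI^2/(4*ρ*L^2*(1+L)) := le_trans (min_le_left _ _) (min_le_right _ _)
  have hK3 : K ≤ EI^2/(2*ρ*L^3) := le_trans (min_le_right _ _) (min_le_left _ _)
  have hK4 : K ≤ J*EI/(2*(J^2 + 3*ρ*L^2/EI)) := le_trans (min_le_right _ _) (min_le_right _ _)
  have hK2' : 4*ρ*L^2*(1+L)*K ≤ EI^2 := by
    rw [le_div_iff₀ (by positivity)] at hK2; nlinarith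
  have hK3' : 2*ρ*L^3*K ≤ EI^2 := by
    rw [le_div_iff₀ (by positivity)] at hK3; nlinarith
  have hK4' : 2*(J^2 + 3*ρ*L^2/EI)*K ≤ J*EI := by
    have hpos : (0:ℝ) < 2*(J^2 + 3*ρ*L^2/EI) := by positivity
    rw [le_div_iff₀ hpos] at hK4; nlinarith
  refine ⟨1/(16*L), 1, 2*K/(L*EI), K/(8*L*EI), 1, K, 1/(2*L), 16*L,
    by positivity, one_pos, by positivity, by positivity, one_pos, hKpos,
    by positivity, by positivity, ?_, ?_, ?_, ?_, ?_, ?_, ?_⟩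
  · -- 1 - L*a₃ - a₄ > 0
    rw [gt_iff_lt]
    have h1 : L * (2*K/(L*EI)) = 2*K/EI := by field_simp
    have h2 : 2*K/EI ≤ 1/2 := by rw [div_le_iff₀ hEI]; linarith
    have h3 : K/(8*L*EI) ≤ 1/8 := by rw [div_le_iff₀ (by positivity)]; nlinarith
    rw [h1]; linarith
  · -- EI/2 - ... > 0
    rw [gt_iff_lt]
    have t1 : 2*ρ*L^3*(2*K/(L*EI))/Real.pi^2 ≤ EI/8 := by
      rw [div_le_iff₀ (by positivity)]
      have : 2*ρ*L^3*(2*K/(L*EI)) = 4*ρ*L^2*K/EI := by field_simp; ring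
      rw [this, div_le_iff₀ hEI]
      nlinarith [mul_pos hρ (mul_pos (mul_pos hL hL) hKpos)]
    have t2 : 8*ρ*L^4*(K/(8*L*EI))/Real.pi^4 ≤ EI/8 := by
      rw [div_le_iff₀ (by positivity)]
      have : 8*ρ*L^4*(K/(8*L*EI)) = ρ*L^3*K/EI := by field_simp
      rw [this, div_le_iff₀ hEI]
      nlinarith [mul_pos hρ (mul_pos (mul_pos (mul_pos hL hL) hL) hKpos)]
    linarith
  · -- EI*a₁/2 - 2ρL³a₄/π² > 0
    rw [gt_iff_lt]
    have t1 : 2*ρ*L^3*(K/(8*L*EI))/Real.pi^2 ≤ EI/(64*L) := by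
      rw [div_le_iff₀ (by positivity)]
      have h0 : 2*ρ*L^3*(K/(8*L*EI)) = ρ*L^2*K/(4*EI) := by field_simp; ring
      have h1 : EI/(64*L) * Real.pi^2 = EI*Real.pi^2/(64*L) := by ring
      rw [h0, h1, div_le_div_iff₀ (by positivity) (by positivity)]
      nlinarith [mul_pos (mul_pos hρ (mul_pos (mul_pos hL hL) hL)) hKpos,
        mul_pos (sub_pos.mpr hπ2) (pow_pos hEI 2),
        mul_pos (mul_pos (sub_pos.mpr hπ2) (pow_pos hEI 2)) hL]
    have h2 : EI * (1/(16*L)) / 2 = EI/(32*L) := by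
      field_simp
      ring
    have h3 : EI/(64*L) < EI/(32*L) := by
      rw [div_lt_div_iff₀ (by positivity) (by positivity)]
      nlinarith
    linarith
  · -- J*EI/a₂ - ... > 0
    rw [gt_iff_lt]
    have e1 : ρ*L^2*(2*K/(L*EI))/(2*(1/(2*L))) = 2*ρ*L^2*K/EI := by
      field_simp
    have e2 : 2*ρ*L^3*(K/(8*L*EI))/3 = ρ*L^2*K/(12*EI) := by
      field_simp; ring
    rw [e1, e2]
    have e3 : 2*ρ*L^2*K/EI = 2*((ρ*L^2/EI)*K) := by ring
    have e4 : ρ*L^2*K/(12*EI) = (ρ*L^2/EI)*K/12 := by ring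
    rw [e3, e4]
    have hQK : 0 < (ρ*L^2/EI)*K := by positivity
    have hKJ : 0 < K*J^2 := by positivity
    have hJEI : 0 < J*EI := by positivity
    have heq : 2*(J^2 + 3*ρ*L^2/EI)*K = 2*(K*J^2) + 6*((ρ*L^2/EI)*K) := by ring
    have hK4'' : 2*(K*J^2) + 6*((ρ*L^2/EI)*K) ≤ J*EI := heq ▸ hK4' 
    have : J*EI/1 = J*EI := by ring
    rw [this]
    linarith
  · -- (1 - L*δ)*a₃ - 4*a₄ > 0
    rw [gt_iff_lt]
    have : (1 - L*(1/(2*L))) * (2*K/(L*EI)) - 4*(K/(8*L*EI)) = K/(2*L*EI) := by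
      field_simp; ring
    rw [this]; positivity
  · -- cross term = 0 ≥ 0
    have : K * 1^2 - 16*L*K*(1/(16*L))*1^2 + EI*(16*L)*(K/(8*L*EI))/2 - L*EI*(2*K/(L*EI))/2 = 0 := by
      field_simp
      ring
    rw [this]
  · -- last strict
    rw [gt_iff_lt]
    have : K*(1/(16*L))^2*1^2 - K*(1/(16*L))*1^2/(16*L) + EI*(K/(8*L*EI))/(2*(16*L))
        = K/(256*L^2) := by field_simp; ring
    rw [this]; positivity
end
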